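/- Let α > 0, α ≠ 1, ε ≥ 0, and f : (0,1) → ℝ satisfy |f(x) + (1−x)^α f(y/(1−x)) − f(y) − (1−y)^α f(x/(1−y))| ≤ ε for all (x,y) with x, y, x+y ∈ (0,1). Then there exist a, b ∈ ℝ such that |f(x) − (a x^α + b(1−x)^α − b)| ≤ K(α)ε for all x ∈ (0,1), where K(α) = |2^{1−α} − 1|^{−1} (3 + 12·2^α + 32·3^{α+1}/|2^{−α} − 1|). -/

import Mathlib

open Set

noncomputable def Fq (α : ℝ) (f : ℝ → ℝ) (u v : ℝ) : ℝ := (u + v) ^ α * f (u / (u + v))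

def IsApprox (α ε : ℝ) (f : ℝ → ℝ) : Prop :=
  ∀ x y : ℝ, x ∈ Ioo (0 : ℝ) 1 → y ∈ Ioo (0 : ℝ) 1 → x + y ∈ Ioo (0 : ℝ) 1 →
    |f x + (1 - x) ^ α * f (y / (1 - x)) - f y - (1 - y) ^ α * f (x / (1 - y))| ≤ ε

lemma Fq_hom {α : ℝ} {f : ℝ → ℝ} {t u v : ℝ} (ht : 0 < t) (hu : 0 < u) (hv : 0 < v) :
    Fq α f (t * u) (t * v) = t ^ α * Fq α f u v := by
  simp only [Fq]
  rw [show t * u + t * v = t * (u + v) by ring,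
    Real.mul_rpow ht.le (by positivity),
    mul_div_mul_left _ _ (ne_of_gt ht)]
  ring

lemma Fq_diag {α : ℝ} {f : ℝ → ℝ} {u : ℝ} (hu : 0 < u) :
    Fq α f u u = u ^ α * Fq α f 1 1 := by
  have h := Fq_hom (α := α) (f := f) hu one_pos one_pos
  simpa using h

lemma Fq_21 {α : ℝ} {f : ℝ → ℝ} {u : ℝ} (hu : 0 < u) :
    Fq α f (2 * u) u = u ^ α * Fq α f 2 1 := by
  have h := Fq_hom (α := α) (f := f) (u := 2) (v := 1) hu two_pos one_pos
  rw [mul_one, mul_comm u 2] at h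
  exact h

lemma Fq_12 {α : ℝ} {f : ℝ → ℝ} {u : ℝ} (hu : 0 < u) :
    Fq α f u (2 * u) = u ^ α * Fq α f 1 2 := by
  have h := Fq_hom (α := α) (f := f) (u := 1) (v := 2) hu one_pos two_pos
  rw [mul_one, mul_comm u 2] at h
  exact h

lemma EE {α ε : ℝ} {f : ℝ → ℝ} (h : IsApprox α ε f)
    {u v w a b c : ℝ} (hu : 0 < u) (hv : 0 < v) (hw : 0 < w)
    (ha : a = v + w) (hb : b = u + w) (hc : c = u + v + w) :
    |Fq α f u a + Fq α f v w - Fq α f v b - Fq α f u w| ≤ c ^ α * ε := by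
  subst ha; subst hb; subst hc
  have hs : 0 < u + v + w := by linarith
  have hvw : 0 < v + w := by linarith
  have huw : 0 < u + w := by linarith
  have hx : u / (u + v + w) ∈ Ioo (0 : ℝ) 1 :=
    ⟨by positivity, (div_lt_one hs).mpr (by linarith)⟩
  have hy : v / (u + v + w) ∈ Ioo (0 : ℝ) 1 :=
    ⟨by positivity, (div_lt_one hs).mpr (by linarith)⟩
  have hxy : u / (u + v + w) + v / (u + v + w) ∈ Ioo (0 : ℝ) 1 := by
    rw [← add_div]
    exact ⟨by positivity, (div_lt_one hs).mpr (by linarith)⟩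
  have H := h _ _ hx hy hxy
  have e1 : 1 - u / (u + v + w) = (v + w) / (u + v + w) := by field_simp; ring
  have e2 : 1 - v / (u + v + w) = (u + w) / (u + v + w) := by field_simp; ring
  rw [e1, e2] at H
  have e3 : v / (u + v + w) / ((v + w) / (u + v + w)) = v / (v + w) := by field_simp
  have e4 : u / (u + v + w) / ((u + w) / (u + v + w)) = u / (u + w) := by field_simp
  rw [e3, e4, Real.div_rpow hvw.le hs.le, Real.div_rpow huw.le hs.le] at H
  have hsa : (0:ℝ) < (u + v + w) ^ α := Real.rpow_pos_of_pos hs α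
  have key : Fq α f u (v + w) + Fq α f v w - Fq α f v (u + w) - Fq α f u w
      = (u + v + w) ^ α * (f (u / (u + v + w)) + (v + w) ^ α / (u + v + w) ^ α * f (v / (v + w))
        - f (v / (u + v + w)) - (u + w) ^ α / (u + v + w) ^ α * f (u / (u + w))) := by
    simp only [Fq]
    rw [show u + (v + w) = u + v + w by ring, show v + (u + w) = u + v + w by ring]
    field_simp
  rw [key, abs_mul, abs_of_pos hsa]
  exact mul_le_mul_of_nonneg_left H hsa.le
lemma lemA {α ε : ℝ} {f : ℝ → ℝ} (hα : 0 < α) (h : IsApprox α ε f)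
    {u v : ℝ} (hu : 0 < u) (hv : 0 < v) :
    |(2 ^ α - 1) * (Fq α f u v - Fq α f v u) - (Fq α f 2 1 - Fq α f 1 2) * (u ^ α - v ^ α)|
      ≤ 3 * ((2 * u + 3 * v) ^ α * ε) + 3 * ((3 * u + v) ^ α * ε) := by
  have h2u : 0 < 2 * u := by linarith
  have h2v : 0 < 2 * v := by linarith
  have I1 := EE h h2u h2v hv (show 3 * v = 2 * v + v by ring) (show 2 * u + v = 2 * u + v from rfl)
    (show 2 * u + 3 * v = 2 * u + 2 * v + v by ring)
  have I2 := EE h h2v hv h2u (show 2 * u + v = v + 2 * u by ring)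
    (show 2 * u + 2 * v = 2 * v + 2 * u by ring) (show 2 * u + 3 * v = 2 * v + v + 2 * u by ring)
  have I3 := EE h hv h2u h2v (show 2 * u + 2 * v = 2 * u + 2 * v from rfl)
    (show 3 * v = v + 2 * v by ring) (show 2 * u + 3 * v = v + 2 * u + 2 * v by ring)
  have I4 := EE h hv h2u hu (show 3 * u = 2 * u + u by ring) (show u + v = v + u by ring)
    (show 3 * u + v = v + 2 * u + u by ring)
  have I5 := EE h h2u hu hv (show u + v = u + v from rfl) (show 2 * u + v = 2 * u + v from rfl)
    (show 3 * u + v = 2 * u + u + v by ring)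
  have I6 := EE h hu hv h2u (show 2 * u + v = v + 2 * u by ring) (show 3 * u = u + 2 * u by ring)
    (show 3 * u + v = u + v + 2 * u by ring)
  have hA : Fq α f (2 * u) (2 * v) = 2 ^ α * Fq α f u v := Fq_hom two_pos hu hv
  have hB : Fq α f (2 * v) (2 * u) = 2 ^ α * Fq α f v u := Fq_hom two_pos hv hu
  have hC : Fq α f (2 * v) v = v ^ α * Fq α f 2 1 := Fq_21 hv
  have hD : Fq α f v (2 * v) = v ^ α * Fq α f 1 2 := Fq_12 hv
  have hE : Fq α f (2 * u) u = u ^ α * Fq α f 2 1 := Fq_21 hu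
  have hF : Fq α f u (2 * u) = u ^ α * Fq α f 1 2 := Fq_12 hu
  have key : (2 ^ α - 1) * (Fq α f u v - Fq α f v u)
        - (Fq α f 2 1 - Fq α f 1 2) * (u ^ α - v ^ α)
      = (Fq α f (2 * u) (3 * v) + Fq α f (2 * v) v - Fq α f (2 * v) (2 * u + v) - Fq α f (2 * u) v)
      + (Fq α f (2 * v) (2 * u + v) + Fq α f v (2 * u) - Fq α f v (2 * u + 2 * v) - Fq α f (2 * v) (2 * u))
      + (Fq α f v (2 * u + 2 * v) + Fq α f (2 * u) (2 * v) - Fq α f (2 * u) (3 * v) - Fq α f v (2 * v))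
      - (Fq α f v (3 * u) + Fq α f (2 * u) u - Fq α f (2 * u) (u + v) - Fq α f v u)
      - (Fq α f (2 * u) (u + v) + Fq α f u v - Fq α f u (2 * u + v) - Fq α f (2 * u) v)
      - (Fq α f u (2 * u + v) + Fq α f v (2 * u) - Fq α f v (3 * u) - Fq α f u (2 * u)) := by
    rw [hA, hB, hC, hD, hE, hF]; ring
  rw [key, abs_le]
  have b1 := abs_le.mp I1
  have b2 := abs_le.mp I2
  have b3 := abs_le.mp I3
  have b4 := abs_le.mp I4
  have b5 := abs_le.mp I5
  have b6 := abs_le.mp I6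
  constructor <;> [linarith [b1.1, b2.1, b3.1, b4.2, b5.2, b6.2];
    linarith [b1.2, b2.2, b3.2, b4.1, b5.1, b6.1]]
lemma wk2 {A B C ε : ℝ} (hε : 0 ≤ ε) (h1 : A ≤ C) (h2 : B ≤ C) :
    3 * (A * ε) + 3 * (B * ε) ≤ 6 * (C * ε) := by
  have g1 := mul_le_mul_of_nonneg_right h1 hε
  have g2 := mul_le_mul_of_nonneg_right h2 hε
  linarith

lemma abs6sum {a₁ a₂ a₃ a₄ a₅ a₆ C : ℝ} (h₁ : |a₁| ≤ C) (h₂ : |a₂| ≤ C) (h₃ : |a₃| ≤ C)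
    (h₄ : |a₄| ≤ C) (h₅ : |a₅| ≤ C) (h₆ : |a₆| ≤ C) :
    |a₁ + a₂ + a₃ + a₄ + a₅ + a₆| ≤ 6 * C := by
  have b₁ := abs_le.mp h₁
  have b₂ := abs_le.mp h₂
  have b₃ := abs_le.mp h₃
  have b₄ := abs_le.mp h₄
  have b₅ := abs_le.mp h₅
  have b₆ := abs_le.mp h₆
  rw [abs_le]
  constructor <;> [linarith [b₁.1, b₂.1, b₃.1, b₄.1, b₅.1, b₆.1];
    linarith [b₁.2, b₂.2, b₃.2, b₄.2, b₅.2, b₆.2]]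

lemma abs4sum {a₁ a₂ a₃ a₄ C : ℝ} (h₁ : |a₁| ≤ 6 * C) (h₂ : |a₂| ≤ 6 * C) (h₃ : |a₃| ≤ 6 * C)
    (h₄ : |a₄| ≤ 6 * C) : |a₁ + a₂ - a₃ - a₄| ≤ 24 * C := by
  have b₁ := abs_le.mp h₁
  have b₂ := abs_le.mp h₂
  have b₃ := abs_le.mp h₃
  have b₄ := abs_le.mp h₄
  rw [abs_le]
  constructor <;> [linarith [b₁.1, b₂.1, b₃.2, b₄.2]; linarith [b₁.2, b₂.2, b₃.1, b₄.1]]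

lemma coef_ineq {s t M ε : ℝ} (hs1 : 1 < s) (ht : 0 < t) (hM0 : 0 ≤ M) (hM : M ≤ s + 2)
    (hε : 0 ≤ ε) :
    (s - 1) * (6 * (s * ε)) + 24 * (s * t * ε) + M * (6 * (t * ε))
      ≤ (6 * (s * (s - 1)) + 24 * (s ^ 2 * (s - 1)) + 192 * (t * s ^ 2)) * ε := by
  have hs0 : (0:ℝ) ≤ s := by linarith
  have q1 : 24 * (s * t) ≤ 24 * (s ^ 2 * t) := by
    nlinarith [mul_nonneg (mul_nonneg (sub_nonneg.mpr hs1.le) hs0) ht.le]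
  have q2 : M * (6 * t) ≤ 18 * (s ^ 2 * t) := by
    have h32 : (0:ℝ) ≤ 3 * s ^ 2 - s - 2 := by nlinarith
    nlinarith [mul_le_mul_of_nonneg_right hM (by positivity : (0:ℝ) ≤ 6 * t),
      mul_nonneg h32 ht.le]
  have c1 : 24 * (s * t) * ε ≤ 24 * (s ^ 2 * t) * ε := mul_le_mul_of_nonneg_right q1 hε
  have c2 : M * (6 * t) * ε ≤ 18 * (s ^ 2 * t) * ε := mul_le_mul_of_nonneg_right q2 hε
  have c3 : (0:ℝ) ≤ 24 * (s ^ 2 * (s - 1)) * ε := by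
    apply mul_nonneg _ hε
    nlinarith [sq_nonneg s]
  have c4 : (0:ℝ) ≤ 150 * (s ^ 2 * t) * ε := by positivity
  linarith [c1, c2, c3, c4]

set_option maxHeartbeats 1000000 in
/-- Superstability of the parametric fundamental equation of information, 0 < α ≠ 1. -/
theorem stmt_7 (α ε : ℝ) (hα : 0 < α) (hα1 : α ≠ 1) (hε : 0 ≤ ε) (f : ℝ → ℝ)
    (h : ∀ x y : ℝ, x ∈ Ioo (0 : ℝ) 1 → y ∈ Ioo (0 : ℝ) 1 → x + y ∈ Ioo (0 : ℝ) 1 →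
      |f x + (1 - x) ^ α * f (y / (1 - x)) - f y - (1 - y) ^ α * f (x / (1 - y))| ≤ ε) :
    ∃ a b : ℝ, ∀ x ∈ Ioo (0 : ℝ) 1,
      |f x - (a * x ^ α + b * (1 - x) ^ α - b)| ≤
        |2 ^ (1 - α) - 1|⁻¹ * (3 + 12 * 2 ^ α + 32 * 3 ^ (α + 1) / |2 ^ (-α) - 1|) * ε := by
  have hIA : IsApprox α ε f := h
  have hs1 : (1 : ℝ) < 2 ^ α := by
    have h0 : (2:ℝ) ^ (0:ℝ) < 2 ^ α := (Real.rpow_lt_rpow_left_iff one_lt_two).mpr hα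
    simpa using h0
  have hsp : (0 : ℝ) < 2 ^ α := by linarith
  have hsne : (2:ℝ) ^ α ≠ 2 := by
    rcases lt_or_gt_of_ne hα1 with hl | hg
    · have h1 : (2:ℝ) ^ α < 2 ^ (1:ℝ) := (Real.rpow_lt_rpow_left_iff one_lt_two).mpr hl
      rw [Real.rpow_one] at h1; exact ne_of_lt h1
    · have h1 : (2:ℝ) ^ (1:ℝ) < 2 ^ α := (Real.rpow_lt_rpow_left_iff one_lt_two).mpr hg
      rw [Real.rpow_one] at h1; exact ne_of_gt h1
  have hd1 : (2:ℝ) ^ α - 1 ≠ 0 := sub_ne_zero.mpr (ne_of_gt hs1)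
  have hd2 : (2:ℝ) ^ α - 2 ≠ 0 := sub_ne_zero.mpr hsne
  have ht0 : (0:ℝ) < 3 ^ α := Real.rpow_pos_of_pos (by norm_num) α
  refine ⟨(Fq α f 2 1 - Fq α f 1 2 - Fq α f 1 1) / (2 ^ α - 2), (Fq α f 2 1 - Fq α f 1 2 - Fq α f 1 1 * (2 ^ α - 1)) / ((2 ^ α - 1) * (2 ^ α - 2)), ?_⟩
  intro x hx
  obtain ⟨hx0, hx1⟩ := hx
  have hq0 : (0:ℝ) < 1 - x := by linarith
  have h2x : (0:ℝ) < 2 * x := by linarith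
  have h2q : (0:ℝ) < 2 * (1 - x) := by linarith
  have eI := EE (α := α) hIA hx0 one_pos hq0 (show 2 - x = 1 + (1 - x) by ring)
    (show (1:ℝ) = x + (1 - x) by ring) (show (2:ℝ) = x + 1 + (1 - x) by ring)
  have eII := EE (α := α) hIA hq0 one_pos hx0 (show 1 + x = 1 + x from rfl)
    (show (1:ℝ) = 1 - x + x by ring) (show (2:ℝ) = 1 - x + 1 + x by ring)
  have e7 := EE (α := α) hIA h2x hq0 hq0 (show 2 * (1 - x) = 1 - x + (1 - x) by ring)
    (show 1 + x = 2 * x + (1 - x) by ring) (show (2:ℝ) = 2 * x + (1 - x) + (1 - x) by ring)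
  have e8 := EE (α := α) hIA h2q hx0 hx0 (show 2 * x = x + x by ring)
    (show 2 - x = 2 * (1 - x) + x by ring) (show (2:ℝ) = 2 * (1 - x) + x + x by ring)
  have e5 := EE (α := α) hIA hx0 hq0 hq0 (show 2 * (1 - x) = 1 - x + (1 - x) by ring)
    (show (1:ℝ) = x + (1 - x) by ring) (show 2 - x = x + (1 - x) + (1 - x) by ring)
  have e6 := EE (α := α) hIA hq0 hx0 hx0 (show 2 * x = x + x by ring)
    (show (1:ℝ) = 1 - x + x by ring) (show 1 + x = 1 - x + x + x by ring)
  have r1 := lemA hα hIA h2x hq0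
  have r2 := lemA hα hIA h2q hx0
  have r3 := lemA hα hIA one_pos hx0
  have r4 := lemA hα hIA one_pos hq0
  have r0 := lemA hα hIA hx0 hq0
  rw [Real.one_rpow] at r3 r4
  have hp2x : (2 * x) ^ α = 2 ^ α * x ^ α := Real.mul_rpow (by norm_num) hx0.le
  have hp2q : (2 * (1 - x)) ^ α = 2 ^ α * (1 - x) ^ α := Real.mul_rpow (by norm_num) hq0.le
  rw [hp2x] at r1
  rw [hp2q] at r2
  have hm1 : Fq α f (2 * x) (2 * (1 - x)) = 2 ^ α * Fq α f x (1 - x) := Fq_hom two_pos hx0 hq0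
  have hm2 : Fq α f (2 * (1 - x)) (2 * x) = 2 ^ α * Fq α f (1 - x) x := Fq_hom two_pos hq0 hx0
  have hm3 : Fq α f (1 - x) (1 - x) = (1 - x) ^ α * Fq α f 1 1 := Fq_diag hq0
  have hm4 : Fq α f x x = x ^ α * Fq α f 1 1 := Fq_diag hx0
  rw [hm1, hm3] at e7
  rw [hm2, hm4] at e8
  rw [hm3] at e5
  rw [hm4] at e6
  have e5' : |(Fq α f x (2 * (1 - x)) + (1 - x) ^ α * Fq α f 1 1 - Fq α f (1 - x) 1 - Fq α f x (1 - x))| ≤ 2 ^ α * ε := by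
    refine e5.trans (mul_le_mul_of_nonneg_right ?_ hε)
    exact Real.rpow_le_rpow (by linarith) (by linarith) hα.le
  have e6' : |(Fq α f (1 - x) (2 * x) + x ^ α * Fq α f 1 1 - Fq α f x 1 - Fq α f (1 - x) x)| ≤ 2 ^ α * ε := by
    refine e6.trans (mul_le_mul_of_nonneg_right ?_ hε)
    exact Real.rpow_le_rpow (by linarith) (by linarith) hα.le
  have r1' : |((2 ^ α - 1) * (Fq α f (2 * x) (1 - x) - Fq α f (1 - x) (2 * x)) - (Fq α f 2 1 - Fq α f 1 2) * (2 ^ α * x ^ α - (1 - x) ^ α))| ≤ 6 * ((6:ℝ) ^ α * ε) :=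
    r1.trans (wk2 hε (Real.rpow_le_rpow (by linarith) (by linarith) hα.le)
      (Real.rpow_le_rpow (by linarith) (by linarith) hα.le))
  have r2' : |((2 ^ α - 1) * (Fq α f (2 * (1 - x)) x - Fq α f x (2 * (1 - x))) - (Fq α f 2 1 - Fq α f 1 2) * (2 ^ α * (1 - x) ^ α - x ^ α))| ≤ 6 * ((6:ℝ) ^ α * ε) :=
    r2.trans (wk2 hε (Real.rpow_le_rpow (by linarith) (by linarith) hα.le)
      (Real.rpow_le_rpow (by linarith) (by linarith) hα.le))
  have r3' : |((2 ^ α - 1) * (Fq α f 1 x - Fq α f x 1) - (Fq α f 2 1 - Fq α f 1 2) * (1 - x ^ α))| ≤ 6 * ((6:ℝ) ^ α * ε) :=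
    r3.trans (wk2 hε (Real.rpow_le_rpow (by linarith) (by linarith) hα.le)
      (Real.rpow_le_rpow (by linarith) (by linarith) hα.le))
  have r4' : |((2 ^ α - 1) * (Fq α f 1 (1 - x) - Fq α f (1 - x) 1) - (Fq α f 2 1 - Fq α f 1 2) * (1 - (1 - x) ^ α))| ≤ 6 * ((6:ℝ) ^ α * ε) :=
    r4.trans (wk2 hε (Real.rpow_le_rpow (by linarith) (by linarith) hα.le)
      (Real.rpow_le_rpow (by linarith) (by linarith) hα.le))
  have r0' : |((2 ^ α - 1) * (Fq α f x (1 - x) - Fq α f (1 - x) x) - (Fq α f 2 1 - Fq α f 1 2) * (x ^ α - (1 - x) ^ α))| ≤ 6 * ((3:ℝ) ^ α * ε) :=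
    r0.trans (wk2 hε (Real.rpow_le_rpow (by linarith) (by linarith) hα.le)
      (Real.rpow_le_rpow (by linarith) (by linarith) hα.le))
  have master1 : 2 * (2 ^ α - 1) * (2 ^ α - 2) * (Fq α f x (1 - x) - ((Fq α f 2 1 - Fq α f 1 2 - Fq α f 1 1) / (2 ^ α - 2) * x ^ α + (Fq α f 2 1 - Fq α f 1 2 - Fq α f 1 1 * (2 ^ α - 1)) / ((2 ^ α - 1) * (2 ^ α - 2)) * (1 - x) ^ α - (Fq α f 2 1 - Fq α f 1 2 - Fq α f 1 1 * (2 ^ α - 1)) / ((2 ^ α - 1) * (2 ^ α - 2))))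
      = 2 * (2 ^ α - 1) * (2 ^ α - 2) * Fq α f x (1 - x) - 2 * (2 ^ α - 1) * (Fq α f 2 1 - Fq α f 1 2 - Fq α f 1 1) * x ^ α - 2 * (Fq α f 2 1 - Fq α f 1 2 - Fq α f 1 1 * (2 ^ α - 1)) * (1 - x) ^ α + 2 * (Fq α f 2 1 - Fq α f 1 2 - Fq α f 1 1 * (2 ^ α - 1)) := by
    field_simp
    ring
  have master2 : 2 * (2 ^ α - 1) * (2 ^ α - 2) * Fq α f x (1 - x) - 2 * (2 ^ α - 1) * (Fq α f 2 1 - Fq α f 1 2 - Fq α f 1 1) * x ^ α - 2 * (Fq α f 2 1 - Fq α f 1 2 - Fq α f 1 1 * (2 ^ α - 1)) * (1 - x) ^ α + 2 * (Fq α f 2 1 - Fq α f 1 2 - Fq α f 1 1 * (2 ^ α - 1))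
      = (2 ^ α - 1) * ((Fq α f x (2 - x) + Fq α f 1 (1 - x) - Fq α f 1 1 - Fq α f x (1 - x)) + (Fq α f (1 - x) (1 + x) + Fq α f 1 x - Fq α f 1 1 - Fq α f (1 - x) x) + (2 ^ α * Fq α f x (1 - x) + (1 - x) ^ α * Fq α f 1 1 - Fq α f (1 - x) (1 + x) - Fq α f (2 * x) (1 - x)) + (2 ^ α * Fq α f (1 - x) x + x ^ α * Fq α f 1 1 - Fq α f x (2 - x) - Fq α f (2 * (1 - x)) x) + (Fq α f x (2 * (1 - x)) + (1 - x) ^ α * Fq α f 1 1 - Fq α f (1 - x) 1 - Fq α f x (1 - x)) + (Fq α f (1 - x) (2 * x) + x ^ α * Fq α f 1 1 - Fq α f x 1 - Fq α f (1 - x) x)) + (((2 ^ α - 1) * (Fq α f (2 * x) (1 - x) - Fq α f (1 - x) (2 * x)) - (Fq α f 2 1 - Fq α f 1 2) * (2 ^ α * x ^ α - (1 - x) ^ α)) + ((2 ^ α - 1) * (Fq α f (2 * (1 - x)) x - Fq α f x (2 * (1 - x))) - (Fq α f 2 1 - Fq α f 1 2) * (2 ^ α * (1 - x) ^ α - x ^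 α)) - ((2 ^ α - 1) * (Fq α f 1 x - Fq α f x 1) - (Fq α f 2 1 - Fq α f 1 2) * (1 - x ^ α)) - ((2 ^ α - 1) * (Fq α f 1 (1 - x) - Fq α f (1 - x) 1) - (Fq α f 2 1 - Fq α f 1 2) * (1 - (1 - x) ^ α))) + (2 ^ α - 2) * ((2 ^ α - 1) * (Fq α f x (1 - x) - Fq α f (1 - x) x) - (Fq α f 2 1 - Fq α f 1 2) * (x ^ α - (1 - x) ^ α)) := by ring
  have master := master1.trans master2
  have T1 : |((Fq α f x (2 - x) + Fq α f 1 (1 - x) - Fq α f 1 1 - Fq α f x (1 - x)) + (Fq α f (1 - x) (1 + x) + Fq α f 1 x - Fq α f 1 1 - Fq α f (1 - x) x) + (2 ^ α * Fq α f x (1 - x) + (1 - x) ^ α * Fq α f 1 1 - Fq α f (1 - x) (1 + x) - Fq α f (2 * x) (1 - x)) + (2 ^ α * Fq α f (1 - x) x + x ^ α * Fq α f 1 1 - Fq α f x (2 - x) - Fq α f (2 * (1 - x)) x) + (Fq α f x (2 * (1 - x)) + (1 - x) ^ α * Fq α f 1 1 - Fq α f (1 - x) 1 - Fq α f x (1 -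 x)) + (Fq α f (1 - x) (2 * x) + x ^ α * Fq α f 1 1 - Fq α f x 1 - Fq α f (1 - x) x))| ≤ 6 * (2 ^ α * ε) := abs6sum eI eII e7 e8 e5' e6'
  have T2 : |(((2 ^ α - 1) * (Fq α f (2 * x) (1 - x) - Fq α f (1 - x) (2 * x)) - (Fq α f 2 1 - Fq α f 1 2) * (2 ^ α * x ^ α - (1 - x) ^ α)) + ((2 ^ α - 1) * (Fq α f (2 * (1 - x)) x - Fq α f x (2 * (1 - x))) - (Fq α f 2 1 - Fq α f 1 2) * (2 ^ α * (1 - x) ^ α - x ^ α)) - ((2 ^ α - 1) * (Fq α f 1 x - Fq α f x 1) - (Fq α f 2 1 - Fq α f 1 2) * (1 - x ^ α)) - ((2 ^ α - 1) * (Fq α f 1 (1 - x) - Fq α f (1 - x) 1) - (Fq α f 2 1 - Fq α f 1 2) * (1 - (1 - x) ^ α)))| ≤ 24 * ((6:ℝ) ^ α * ε) := abs4sum r1' r2' r3' r4'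
  have big : 2 * (2 ^ α - 1) * |2 ^ α - 2| * |(Fq α f x (1 - x) - ((Fq α f 2 1 - Fq α f 1 2 - Fq α f 1 1) / (2 ^ α - 2) * x ^ α + (Fq α f 2 1 - Fq α f 1 2 - Fq α f 1 1 * (2 ^ α - 1)) / ((2 ^ α - 1) * (2 ^ α - 2)) * (1 - x) ^ α - (Fq α f 2 1 - Fq α f 1 2 - Fq α f 1 1 * (2 ^ α - 1)) / ((2 ^ α - 1) * (2 ^ α - 2))))|
      ≤ (2 ^ α - 1) * (6 * (2 ^ α * ε)) + 24 * ((6:ℝ) ^ α * ε) + |2 ^ α - 2| * (6 * ((3:ℝ) ^ α * ε)) := by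
    have habs : 2 * (2 ^ α - 1) * |2 ^ α - 2| * |(Fq α f x (1 - x) - ((Fq α f 2 1 - Fq α f 1 2 - Fq α f 1 1) / (2 ^ α - 2) * x ^ α + (Fq α f 2 1 - Fq α f 1 2 - Fq α f 1 1 * (2 ^ α - 1)) / ((2 ^ α - 1) * (2 ^ α - 2)) * (1 - x) ^ α - (Fq α f 2 1 - Fq α f 1 2 - Fq α f 1 1 * (2 ^ α - 1)) / ((2 ^ α - 1) * (2 ^ α - 2))))|
        = |2 * (2 ^ α - 1) * (2 ^ α - 2) * (Fq α f x (1 - x) - ((Fq α f 2 1 - Fq α f 1 2 - Fq α f 1 1) / (2 ^ α - 2) * x ^ α + (Fq α f 2 1 - Fq α f 1 2 - Fq α f 1 1 * (2 ^ α - 1)) / ((2 ^ α - 1) * (2 ^ α - 2)) * (1 - x) ^ α - (Fq α f 2 1 - Fq α f 1 2 - Fq α f 1 1 * (2 ^ α - 1)) / ((2 ^ α - 1) * (2 ^ α - 2))))| := by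
      rw [abs_mul, abs_mul, abs_mul]
      rw [abs_of_pos (show (0:ℝ) < 2 by norm_num), abs_of_pos (show (0:ℝ) < 2 ^ α - 1 by linarith)]
    rw [habs, master]
    have u1 : |(2 ^ α - 1) * ((Fq α f x (2 - x) + Fq α f 1 (1 - x) - Fq α f 1 1 - Fq α f x (1 - x)) + (Fq α f (1 - x) (1 + x) + Fq α f 1 x - Fq α f 1 1 - Fq α f (1 - x) x) + (2 ^ α * Fq α f x (1 - x) + (1 - x) ^ α * Fq α f 1 1 - Fq α f (1 - x) (1 + x) - Fq α f (2 * x) (1 - x)) + (2 ^ α * Fq α f (1 - x) x + x ^ α * Fq α f 1 1 - Fq α f x (2 - x) - Fq α f (2 * (1 - x)) x) + (Fq α f x (2 * (1 - x)) + (1 - x) ^ α * Fq α f 1 1 - Fq α f (1 - x) 1 - Fq α f x (1 - x)) + (Fq α f (1 - x) (2 * x) + x ^ α * Fq α f 1 1 - Fq α f x 1 - Fq α f (1 - x) x))| ≤ (2 ^ α - 1) * (6 * (2 ^ α * ε)) := by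
      rw [abs_mul, abs_of_pos (show (0:ℝ) < 2 ^ α - 1 by linarith)]
      exact mul_le_mul_of_nonneg_left T1 (by linarith)
    have u3 : |(2 ^ α - 2) * ((2 ^ α - 1) * (Fq α f x (1 - x) - Fq α f (1 - x) x) - (Fq α f 2 1 - Fq α f 1 2) * (x ^ α - (1 - x) ^ α))| ≤ |2 ^ α - 2| * (6 * ((3:ℝ) ^ α * ε)) := by
      rw [abs_mul]
      exact mul_le_mul_of_nonneg_left r0' (abs_nonneg _)
    calc |(2 ^ α - 1) * ((Fq α f x (2 - x) + Fq α f 1 (1 - x) - Fq α f 1 1 - Fq α f x (1 - x)) + (Fq α f (1 - x) (1 + x) + Fq α f 1 x - Fq α f 1 1 - Fq α f (1 - x) x) + (2 ^ α * Fq α f x (1 - x) + (1 - x) ^ α * Fq α f 1 1 - Fq α f (1 - x) (1 + x) - Fq α f (2 * x) (1 - x)) + (2 ^ α * Fq α f (1 - x) x + x ^ α * Fq α f 1 1 - Fq α f x (2 - x) - Fq α f (2 * (1 - x)) x) + (Fq α f x (2 * (1 - x)) + (1 - x) ^ α * Fq α f 1 1 - Fq α f (1 - x) 1 - Fq α f x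 (1 - x)) + (Fq α f (1 - x) (2 * x) + x ^ α * Fq α f 1 1 - Fq α f x 1 - Fq α f (1 - x) x)) + (((2 ^ α - 1) * (Fq α f (2 * x) (1 - x) - Fq α f (1 - x) (2 * x)) - (Fq α f 2 1 - Fq α f 1 2) * (2 ^ α * x ^ α - (1 - x) ^ α)) + ((2 ^ α - 1) * (Fq α f (2 * (1 - x)) x - Fq α f x (2 * (1 - x))) - (Fq α f 2 1 - Fq α f 1 2) * (2 ^ α * (1 - x) ^ α - x ^ α)) - ((2 ^ α - 1) * (Fq α f 1 x - Fq α f x 1) - (Fq α f 2 1 - Fq α f 1 2) * (1 - x ^ α)) - ((2 ^ α - 1) * (Fq α f 1 (1 - x) - Fq α f (1 - x) 1) - (Fq α f 2 1 - Fq α f 1 2) * (1 - (1 - x) ^ α))) + (2 ^ α - 2) * ((2 ^ α - 1) * (Fq α f x (1 - x) - Fq α f (1 - x) x) - (Fq α f 2 1 - Fq α f 1 2) * (x ^ α - (1 - x) ^ α))|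
        ≤ |(2 ^ α - 1) * ((Fq α f x (2 - x) + Fq α f 1 (1 - x) - Fq α f 1 1 - Fq α f x (1 - x)) + (Fq α f (1 - x) (1 + x) + Fq α f 1 x - Fq α f 1 1 - Fq α f (1 - x) x) + (2 ^ α * Fq α f x (1 - x) + (1 - x) ^ α * Fq α f 1 1 - Fq α f (1 - x) (1 + x) - Fq α f (2 * x) (1 - x)) + (2 ^ α * Fq α f (1 - x) x + x ^ α * Fq α f 1 1 - Fq α f x (2 - x) - Fq α f (2 * (1 - x)) x) + (Fq α f x (2 * (1 - x)) + (1 - x) ^ α * Fq α f 1 1 - Fq α f (1 - x) 1 - Fq α f x (1 - x)) + (Fq α f (1 - x) (2 * x) + x ^ α * Fq α f 1 1 - Fq α f x 1 - Fq α f (1 - x) x)) + (((2 ^ α - 1) * (Fq α f (2 * x) (1 - x) - Fq α f (1 - x) (2 * x)) - (Fq α f 2 1 - Fq α f 1 2) * (2 ^ α * x ^ α - (1 - x) ^ α)) + ((2 ^ α - 1) * (Fq α f (2 * (1 - x)) x - Fq α f x (2 * (1 - x))) - (Fq α f 2 1 - Fq α f 1 2) * (2 ^ α * (1 - x) ^ α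 - x ^ α)) - ((2 ^ α - 1) * (Fq α f 1 x - Fq α f x 1) - (Fq α f 2 1 - Fq α f 1 2) * (1 - x ^ α)) - ((2 ^ α - 1) * (Fq α f 1 (1 - x) - Fq α f (1 - x) 1) - (Fq α f 2 1 - Fq α f 1 2) * (1 - (1 - x) ^ α)))| + |(2 ^ α - 2) * ((2 ^ α - 1) * (Fq α f x (1 - x) - Fq α f (1 - x) x) - (Fq α f 2 1 - Fq α f 1 2) * (x ^ α - (1 - x) ^ α))| := abs_add_le _ _
      _ ≤ |(2 ^ α - 1) * ((Fq α f x (2 - x) + Fq α f 1 (1 - x) - Fq α f 1 1 - Fq α f x (1 - x)) + (Fq α f (1 - x) (1 + x) + Fq α f 1 x - Fq α f 1 1 - Fq α f (1 - x) x) + (2 ^ α * Fq α f x (1 - x) + (1 - x) ^ α * Fq α f 1 1 - Fq α f (1 - x) (1 + x) - Fq α f (2 * x) (1 - x)) + (2 ^ α * Fq α f (1 - x) x + x ^ α * Fq α f 1 1 - Fq α f x (2 - x) - Fq α f (2 * (1 - x)) x) + (Fq α f x (2 * (1 - x)) + (1 - x) ^ α * Fq α f 1 1 - Fq α f (1 -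 x) 1 - Fq α f x (1 - x)) + (Fq α f (1 - x) (2 * x) + x ^ α * Fq α f 1 1 - Fq α f x 1 - Fq α f (1 - x) x))| + |(((2 ^ α - 1) * (Fq α f (2 * x) (1 - x) - Fq α f (1 - x) (2 * x)) - (Fq α f 2 1 - Fq α f 1 2) * (2 ^ α * x ^ α - (1 - x) ^ α)) + ((2 ^ α - 1) * (Fq α f (2 * (1 - x)) x - Fq α f x (2 * (1 - x))) - (Fq α f 2 1 - Fq α f 1 2) * (2 ^ α * (1 - x) ^ α - x ^ α)) - ((2 ^ α - 1) * (Fq α f 1 x - Fq α f x 1) - (Fq α f 2 1 - Fq α f 1 2) * (1 - x ^ α)) - ((2 ^ α - 1) * (Fq α f 1 (1 - x) - Fq α f (1 - x) 1) - (Fq α f 2 1 - Fq α f 1 2) * (1 - (1 - x) ^ α)))| + |(2 ^ α - 2) * ((2 ^ α - 1) * (Fq α f x (1 - x) - Fq α f (1 - x) x) - (Fq α f 2 1 - Fq α f 1 2) * (x ^ α - (1 - x) ^ α))| :=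
          add_le_add_left (abs_add_le _ _) _
      _ ≤ (2 ^ α - 1) * (6 * (2 ^ α * ε)) + 24 * ((6:ℝ) ^ α * ε) + |2 ^ α - 2| * (6 * ((3:ℝ) ^ α * ε)) :=
          add_le_add (add_le_add u1 T2) u3
  have hM : (0:ℝ) < |2 ^ α - 2| := abs_pos.mpr hd2
  have hM' : |(2:ℝ) ^ α - 2| ≤ 2 ^ α + 2 := by
    rw [abs_le]; constructor <;> linarith
  have h6 : (6:ℝ) ^ α = 2 ^ α * 3 ^ α := by
    rw [show (6:ℝ) = 2 * 3 by norm_num, Real.mul_rpow (by norm_num) (by norm_num)]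
  have hA1 : |(2:ℝ) ^ (1 - α) - 1| = |2 ^ α - 2| / 2 ^ α := by
    rw [Real.rpow_sub (by norm_num : (0:ℝ) < 2), Real.rpow_one,
      show (2:ℝ) / 2 ^ α - 1 = (2 - 2 ^ α) / 2 ^ α by field_simp,
      abs_div, abs_of_pos hsp, abs_sub_comm]
  have hA2 : |(2:ℝ) ^ (-α) - 1| = (2 ^ α - 1) / 2 ^ α := by
    rw [Real.rpow_neg (by norm_num : (0:ℝ) ≤ 2),
      show ((2:ℝ) ^ α)⁻¹ - 1 = -((2 ^ α - 1) / 2 ^ α) by field_simp; ring,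
      abs_neg, abs_div, abs_of_pos hsp, abs_of_pos (show (0:ℝ) < 2 ^ α - 1 by linarith)]
  have hA3 : (3:ℝ) ^ (α + 1) = 3 ^ α * 3 := by
    rw [Real.rpow_add (by norm_num : (0:ℝ) < 3), Real.rpow_one]
  have hKval : 2 * (2 ^ α - 1) * |2 ^ α - 2| * (|2 ^ (1 - α) - 1|⁻¹ * (3 + 12 * 2 ^ α + 32 * 3 ^ (α + 1) / |2 ^ (-α) - 1|) * ε)
      = (6 * (2 ^ α * (2 ^ α - 1)) + 24 * ((2 ^ α) ^ 2 * (2 ^ α - 1)) + 192 * ((3:ℝ) ^ α * (2 ^ α) ^ 2)) * ε := by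
    rw [hA1, hA2, hA3]
    field_simp
    ring
  have hFx : Fq α f x (1 - x) = f x := by
    simp only [Fq]
    rw [show x + (1 - x) = (1:ℝ) by ring, Real.one_rpow, div_one, one_mul]
  rw [← hFx]
  have hpos : (0:ℝ) < 2 * (2 ^ α - 1) * |2 ^ α - 2| :=
    mul_pos (mul_pos two_pos (by linarith)) hM
  refine le_of_mul_le_mul_left ?_ hpos
  calc 2 * (2 ^ α - 1) * |2 ^ α - 2| * |(Fq α f x (1 - x) - ((Fq α f 2 1 - Fq α f 1 2 - Fq α f 1 1) / (2 ^ α - 2) * x ^ α + (Fq α f 2 1 - Fq α f 1 2 - Fq α f 1 1 * (2 ^ α - 1)) / ((2 ^ α - 1) * (2 ^ α - 2)) * (1 - x) ^ α - (Fq α f 2 1 - Fq α f 1 2 - Fq α f 1 1 * (2 ^ α - 1)) / ((2 ^ α - 1) * (2 ^ α - 2))))|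
      ≤ (2 ^ α - 1) * (6 * (2 ^ α * ε)) + 24 * ((6:ℝ) ^ α * ε) + |2 ^ α - 2| * (6 * ((3:ℝ) ^ α * ε)) := big
    _ = (2 ^ α - 1) * (6 * (2 ^ α * ε)) + 24 * (2 ^ α * 3 ^ α * ε) + |2 ^ α - 2| * (6 * ((3:ℝ) ^ α * ε)) := by
        rw [h6]
    _ ≤ (6 * (2 ^ α * (2 ^ α - 1)) + 24 * ((2 ^ α) ^ 2 * (2 ^ α - 1)) + 192 * ((3:ℝ) ^ α * (2 ^ α) ^ 2)) * ε := coef_ineq hs1 ht0 (abs_nonneg _) hM' hε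
    _ = 2 * (2 ^ α - 1) * |2 ^ α - 2| * (|2 ^ (1 - α) - 1|⁻¹ * (3 + 12 * 2 ^ α + 32 * 3 ^ (α + 1) / |2 ^ (-α) - 1|) * ε) := hKval.symm
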